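/- Let X and Y be compact Hausdorff Polish spaces of the same Fréchet dimension type (each homeomorphic to a subspace of the other). Then there are countable partitions ⟨X_n⟩ and ⟨Y_n⟩ of X and Y into Δ⁰₂ pieces such that X_n is homeomorphic to Y_n for every n. -/

import Mathlib

/-- A `Δ⁰₂` set: simultaneously a countable union of closed sets and a countable
intersection of open sets. -/
def IsDelta02 {X : Type*} [TopologicalSpace X] (S : Set X) : Prop :=
  (∃ F : ℕ → Set X, (∀ n, IsClosed (F n)) ∧ S = ⋃ n, F n) ∧
  (∃ U : ℕ → Set X, (∀ n, IsOpen (U n)) ∧ S = ⋂ n, U n)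

open Set Topology

section Aux

variable {X Y : Type*}

/-- The pair of decreasing sequences `X ⊇ g(Y) ⊇ g(f(X)) ⊇ …` and
`Y ⊇ f(X) ⊇ f(g(Y)) ⊇ …` used in the Schröder–Bernstein construction. -/
def sbSeq (f : X → Y) (g : Y → X) : ℕ → Set X × Set Y
  | 0 => (Set.univ, Set.univ)
  | n + 1 => (g '' (sbSeq f g n).2, f '' (sbSeq f g n).1)

lemma sbSeq_step (f : X → Y) (g : Y → X) :
    ∀ n, (sbSeq f g (n + 1)).1 ⊆ (sbSeq f g n).1 ∧
      (sbSeq f g (n + 1)).2 ⊆ (sbSeq f g n).2 := by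
  intro n
  induction n with
  | zero => exact ⟨Set.subset_univ _, Set.subset_univ _⟩
  | succ n ih => exact ⟨Set.image_mono ih.2, Set.image_mono ih.1⟩

lemma sbSeq_anti1 (f : X → Y) (g : Y → X) : Antitone fun n => (sbSeq f g n).1 :=
  antitone_nat_of_succ_le fun n => (sbSeq_step f g n).1

lemma sbSeq_anti2 (f : X → Y) (g : Y → X) : Antitone fun n => (sbSeq f g n).2 :=
  antitone_nat_of_succ_le fun n => (sbSeq_step f g n).2

variable [TopologicalSpace X] [TopologicalSpace Y]

lemma sbSeq_compact [CompactSpace X] [CompactSpace Y] {f : X → Y} {g : Y → X}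
    (hf : Continuous f) (hg : Continuous g) :
    ∀ n, IsCompact (sbSeq f g n).1 ∧ IsCompact (sbSeq f g n).2 := by
  intro n
  induction n with
  | zero => exact ⟨isCompact_univ, isCompact_univ⟩
  | succ n ih => exact ⟨ih.2.image hg, ih.1.image hf⟩

/-- An embedding restricts to a homeomorphism from any set onto its image. -/
lemma nonempty_homeo_of_image_eq {f : X → Y} (hf : Topology.IsEmbedding f)
    {S : Set X} {T : Set Y} (h : f '' S = T) : Nonempty (↥S ≃ₜ ↥T) :=
  ⟨(Topology.IsEmbedding.toHomeomorph (hf.comp Topology.IsEmbedding.subtypeVal)).trans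
    (Homeomorph.setCongr (by rw [Set.range_comp, Subtype.range_coe, h]))⟩

/-- In a Polish space, the difference of two closed sets is `Δ⁰₂`. -/
lemma isDelta02_diff [PolishSpace X] {C D : Set X}
    (hC : IsClosed C) (hD : IsClosed D) : IsDelta02 (C \ D) := by
  letI := TopologicalSpace.upgradeIsCompletelyMetrizable X
  obtain ⟨U, hU, hCU⟩ := hC.isGδ.eq_iInter_nat
  obtain ⟨V, hV, hDV⟩ := hD.isGδ.eq_iInter_nat
  constructor
  · refine ⟨fun n => C ∩ (V n)ᶜ, fun n => hC.inter (hV n).isClosed_compl, ?_⟩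
    rw [Set.diff_eq, hDV, Set.compl_iInter, Set.inter_iUnion]
  · refine ⟨fun n => U n ∩ Dᶜ, fun n => (hU n).inter hD.isOpen_compl, ?_⟩
    rw [Set.diff_eq, hCU, Set.iInter_inter]

/-- The canonical partition associated to a decreasing chain:
piece `0` is the intersection of the chain, piece `n+1` is `C n \ C (n+1)`. -/
def chainPieces (C : ℕ → Set X) : ℕ → Set X
  | 0 => ⋂ m, C m
  | n + 1 => C n \ C (n + 1)

lemma chainPieces_pairwise {C : ℕ → Set X} (hanti : Antitone C) :
    Pairwise (Function.onFun Disjoint (chainPieces C)) := by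
  have key : ∀ i j, i < j → Disjoint (chainPieces C i) (chainPieces C j) := by
    intro i j hij
    rw [Set.disjoint_left]
    intro x hxi hxj
    match i, j, hij with
    | 0, (k + 1), _ =>
      exact hxj.2 (hanti (le_refl (k + 1)) (Set.mem_iInter.1 hxi (k + 1)))
    | (a + 1), (b + 1), h =>
      exact hxi.2 (hanti (by omega : a + 1 ≤ b) hxj.1)
  intro i j hij
  rcases lt_or_gt_of_ne hij with h | h
  · exact key i j h
  · exact (key j i h).symm

lemma chainPieces_iUnion {C : ℕ → Set X} (h0 : C 0 = Set.univ) :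
    (⋃ n, chainPieces C n) = Set.univ := by
  ext x
  simp only [Set.mem_iUnion, Set.mem_univ, iff_true]
  by_cases hx : ∀ n, x ∈ C n
  · exact ⟨0, Set.mem_iInter.2 hx⟩
  · push_neg at hx
    classical
    have hex : ∃ n, x ∉ C n := hx
    set n := Nat.find hex with hn
    have hnn : x ∉ C n := Nat.find_spec hex
    have hpos : n ≠ 0 := by
      intro h
      exact hnn (by rw [h, h0]; trivial)
    obtain ⟨m, hm⟩ := Nat.exists_eq_succ_of_ne_zero hpos
    refine ⟨m + 1, ?_, fun hcc => hnn (by rw [hm]; exact hcc)⟩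
    by_contra hcon
    exact Nat.find_min hex (by omega) hcon

end Aux

/-- Two compact Hausdorff Polish spaces of the same Fréchet dimension type (each
embeds homeomorphically into the other) admit countable partitions into `Δ⁰₂` pieces
which are pairwise homeomorphic. -/
theorem compact_polish_same_frechet_type_pw_homeo {X Y : Type*}
    [TopologicalSpace X] [TopologicalSpace Y] [PolishSpace X] [PolishSpace Y]
    [CompactSpace X] [CompactSpace Y] [T2Space X] [T2Space Y]
    (f : X → Y) (g : Y → X)
    (hf : Topology.IsEmbedding f) (hg : Topology.IsEmbedding g) :
    ∃ (A : ℕ → Set X) (B : ℕ → Set Y),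
      Pairwise (Function.onFun Disjoint A) ∧ (⋃ n, A n) = Set.univ ∧
      Pairwise (Function.onFun Disjoint B) ∧ (⋃ n, B n) = Set.univ ∧
      (∀ n, IsDelta02 (A n)) ∧ (∀ n, IsDelta02 (B n)) ∧
      ∀ n, Nonempty (↥(A n) ≃ₜ ↥(B n)) := by
  classical
  set XS : ℕ → Set X := fun n => (sbSeq f g n).1 with hXS
  set YS : ℕ → Set Y := fun n => (sbSeq f g n).2 with hYS
  have hX0 : XS 0 = Set.univ := rfl
  have hY0 : YS 0 = Set.univ := rfl
  have hXsucc : ∀ n, XS (n + 1) = g '' YS n := fun n => rfl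
  have hYsucc : ∀ n, YS (n + 1) = f '' XS n := fun n => rfl
  have hXanti : Antitone XS := sbSeq_anti1 f g
  have hYanti : Antitone YS := sbSeq_anti2 f g
  have hXc : ∀ n, IsCompact (XS n) := fun n =>
    (sbSeq_compact hf.continuous hg.continuous n).1
  have hYc : ∀ n, IsCompact (YS n) := fun n =>
    (sbSeq_compact hf.continuous hg.continuous n).2
  have hXcl : ∀ n, IsClosed (XS n) := fun n => (hXc n).isClosed
  have hYcl : ∀ n, IsClosed (YS n) := fun n => (hYc n).isClosed
  -- the reindexing bijection of positive pieces
  set σ : ℕ → ℕ := fun n => if n % 2 = 0 then n + 1 else n - 1 with hσ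
  have hσσ : ∀ n, σ (σ n) = n := by
    intro n
    simp only [hσ]
    split_ifs <;> omega
  set τ : ℕ → ℕ := fun n => Nat.casesOn n 0 (fun m => σ m + 1) with hτ
  have hττ : ∀ n, τ (τ n) = n := by
    intro n
    match n with
    | 0 => rfl
    | m + 1 => simp only [hτ, hσσ]
  have hτbij : Function.Bijective τ :=
    Function.Involutive.bijective hττ
  -- the partitions
  set A : ℕ → Set X := chainPieces XS with hA
  set D : ℕ → Set Y := chainPieces YS with hD
  set B : ℕ → Set Y := fun n => D (τ n) with hB
  refine ⟨A, B, chainPieces_pairwise hXanti, chainPieces_iUnion hX0, ?_, ?_, ?_, ?_, ?_⟩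
  · -- pairwise disjoint B
    intro i j hij
    exact chainPieces_pairwise hYanti (fun h => hij (hτbij.1 h))
  · -- union B
    have : (⋃ n, B n) = ⋃ n, D n := by
      apply Set.iUnion_congr_of_surjective τ hτbij.2
      intro n; rfl
    rw [this]
    exact chainPieces_iUnion hY0
  · -- A n is Δ⁰₂
    intro n
    match n with
    | 0 =>
      have hcl : IsClosed (A 0) := isClosed_iInter hXcl
      have : A 0 = A 0 \ (∅ : Set X) := (Set.diff_empty).symm
      rw [this]
      exact isDelta02_diff hcl isClosed_empty
    | n + 1 => exact isDelta02_diff (hXcl n) (hXcl (n + 1))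
  · -- B n is Δ⁰₂
    intro n
    have : ∀ m, IsDelta02 (D m) := by
      intro m
      match m with
      | 0 =>
        have hcl : IsClosed (D 0) := isClosed_iInter hYcl
        have : D 0 = D 0 \ (∅ : Set Y) := (Set.diff_empty).symm
        rw [this]
        exact isDelta02_diff hcl isClosed_empty
      | m + 1 => exact isDelta02_diff (hYcl m) (hYcl (m + 1))
    exact this (τ n)
  · -- the homeomorphisms
    intro n
    match n with
    | 0 =>
      -- f '' (⋂ XS) = ⋂ YS
      have himg : f '' (⋂ m, XS m) = ⋂ m, YS m := by
        apply Set.Subset.antisymm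
        · intro y hy
          obtain ⟨x, hx, rfl⟩ := hy
          apply Set.mem_iInter.2
          intro m
          match m with
          | 0 => rw [hY0]; trivial
          | m + 1 =>
            rw [hYsucc]
            exact ⟨x, Set.mem_iInter.1 hx m, rfl⟩
        · intro y hy
          have hne : ∀ m, (XS m ∩ f ⁻¹' {y}).Nonempty := by
            intro m
            have : y ∈ YS (m + 1) := Set.mem_iInter.1 hy (m + 1)
            rw [hYsucc] at this
            obtain ⟨x, hx, hxy⟩ := this
            exact ⟨x, hx, by simpa using hxy⟩
          have hclp : IsClosed (f ⁻¹' {y}) :=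
            (isClosed_singleton).preimage hf.continuous
          have hne2 : (⋂ m, XS m ∩ f ⁻¹' {y}).Nonempty := by
            apply IsCompact.nonempty_iInter_of_sequence_nonempty_isCompact_isClosed
              (fun m => XS m ∩ f ⁻¹' {y})
            · intro m
              exact Set.inter_subset_inter_left _ (hXanti (Nat.le_succ m))
            · exact hne
            · exact ((hXc 0).inter_right hclp)
            · exact fun m => (hXcl m).inter hclp
          obtain ⟨x, hx⟩ := hne2
          refine ⟨x, Set.mem_iInter.2 fun m => (Set.mem_iInter.1 hx m).1, ?_⟩
          have := (Set.mem_iInter.1 hx 0).2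
          simpa using this
      exact nonempty_homeo_of_image_eq hf himg
    | n + 1 =>
      rcases Nat.even_or_odd n with he | ho
      · -- σ n = n + 1 ; f maps A (n+1) onto B (n+1)
        have hσn : σ n = n + 1 := by
          simp only [hσ]
          rw [if_pos (Nat.even_iff.1 he)]
        have hBn : B (n + 1) = YS (n + 1) \ YS (n + 2) := by
          simp only [hB, hτ, hD, hσn]
          rfl
        have himg : f '' (A (n + 1)) = B (n + 1) := by
          rw [hBn]
          show f '' (XS n \ XS (n + 1)) = _
          rw [Set.image_diff hf.injective, ← hYsucc, ← hYsucc]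
        exact nonempty_homeo_of_image_eq hf himg
      · -- n = m + 1 odd; g maps B (n+1) onto A (n+1)
        obtain ⟨m, rfl⟩ := ho
        have hσn : σ (2 * m + 1) = 2 * m := by
          simp only [hσ]
          rw [if_neg (by omega)]
          omega
        have hBn : B (2 * m + 1 + 1) = YS (2 * m) \ YS (2 * m + 1) := by
          simp only [hB, hτ, hD, hσn]
          rfl
        have himg : g '' (B (2 * m + 1 + 1)) = A (2 * m + 1 + 1) := by
          rw [hBn]
          show _ = XS (2 * m + 1) \ XS (2 * m + 2)
          rw [Set.image_diff hg.injective, ← hXsucc, ← hXsucc]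
        obtain ⟨e⟩ := nonempty_homeo_of_image_eq hg himg
        exact ⟨e.symm⟩
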